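/- Let 𝒳 = {x_1,...,x_n} be a finite set and 1 ≤ k ≤ n. A vector (t_1,...,t_n) of real numbers with Σ_{i=1}^{n} t_i = k is admissible (i.e., there exists a probability mass function Q on 𝒳^k such that t_i = g_Q(x_i) for all i ∈ [1:n]) if and only if 0 ≤ t_i ≤ 1 for all i ∈ [1:n]. -/

import Mathlib

open Finset

/-- A `k`-guess strategy on `Fin n` is a probability mass function on `k`-tuples. -/
def IsStrategy {n k : ℕ} (Q : (Fin k → Fin n) → ℝ) : Prop :=
  (∀ a, 0 ≤ Q a) ∧ ∑ a, Q a = 1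

/-- `succProb Q x` is the probability that at least one of the `k` guesses equals `x`. -/
noncomputable def succProb {n k : ℕ} (Q : (Fin k → Fin n) → ℝ) (x : Fin n) : ℝ :=
  ∑ a ∈ Finset.univ.filter (fun a : Fin k → Fin n => ∃ j, a j = x), Q a

lemma succProb_comb {n k : ℕ} (Q1 Q2 : (Fin k → Fin n) → ℝ) (c c' : ℝ) (x : Fin n) :
    succProb (fun a => c * Q1 a + c' * Q2 a) x = c * succProb Q1 x + c' * succProb Q2 x := by
  simp [succProb, Finset.sum_add_distrib, Finset.mul_sum]

/-- Base case: a 0/1 vector with sum `k` is achieved by a deterministic strategy. -/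
lemma base_case {n k : ℕ} (t : Fin n → ℝ) (h01 : ∀ i, t i = 0 ∨ t i = 1)
    (ht : ∑ i, t i = k) :
    ∃ Q : (Fin k → Fin n) → ℝ, IsStrategy Q ∧ ∀ i, t i = succProb Q i := by
  set S : Finset (Fin n) := Finset.univ.filter (fun i => t i = 1) with hS
  have hsum : ∑ i, t i = (S.card : ℝ) := by
    rw [hS, Finset.card_filter]
    push_cast
    apply Finset.sum_congr rfl
    intro i _
    rcases h01 i with h | h <;> simp [h]
  have hcard : S.card = k := by
    have : (S.card : ℝ) = (k : ℝ) := by rw [← hsum, ht]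
    exact_mod_cast this
  let e := S.orderIsoOfFin hcard
  let a : Fin k → Fin n := fun j => (e j : Fin n)
  have hmem : ∀ x : Fin n, (∃ j, a j = x) ↔ x ∈ S := by
    intro x
    constructor
    · rintro ⟨j, rfl⟩; exact (e j).2
    · intro hx
      obtain ⟨j, hj⟩ := e.surjective ⟨x, hx⟩
      exact ⟨j, by simp [a, hj]⟩
  refine ⟨fun b => if b = a then 1 else 0, ⟨?_, ?_⟩, ?_⟩
  · intro b; positivity
  · simp
  · intro x
    have : succProb (fun b => if b = a then (1:ℝ) else 0) x
        = if a ∈ Finset.univ.filter (fun b : Fin k → Fin n => ∃ j, b j = x) then (1:ℝ) else 0 := by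
      rw [succProb, Finset.sum_ite_eq' _ a (fun _ => (1:ℝ))]
    rw [this]
    by_cases hx : x ∈ S
    · have h1 : t x = 1 := by simpa [hS] using hx
      rw [h1, if_pos]
      simp only [Finset.mem_filter, Finset.mem_univ, true_and]
      exact (hmem x).mpr hx
    · have h0 : t x = 0 := by
        rcases h01 x with h | h
        · exact h
        · exact absurd (by simpa [hS] using h) hx
      rw [h0, if_neg]
      simp only [Finset.mem_filter, Finset.mem_univ, true_and]
      exact fun h => hx ((hmem x).mp h)

lemma key_lemma {n k : ℕ} :
    ∀ m : ℕ, ∀ t : Fin n → ℝ,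
      (Finset.univ.filter (fun i => t i ≠ 0 ∧ t i ≠ 1)).card ≤ m →
      (∀ i, 0 ≤ t i ∧ t i ≤ 1) → ∑ i, t i = k →
      ∃ Q : (Fin k → Fin n) → ℝ, IsStrategy Q ∧ ∀ i, t i = succProb Q i := by
  intro m
  induction m with
  | zero =>
    intro t hcard h01 ht
    apply base_case t _ ht
    intro i
    by_contra h
    push_neg at h
    have : i ∈ Finset.univ.filter (fun i => t i ≠ 0 ∧ t i ≠ 1) := by
      simp [h.1, h.2]
    have := Finset.card_pos.mpr ⟨i, this⟩
    omega
  | succ m ih =>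
    intro t hcard hb ht
    set F : Finset (Fin n) := Finset.univ.filter (fun i => t i ≠ 0 ∧ t i ≠ 1) with hF
    by_cases hFe : F.Nonempty
    swap
    · -- F empty: base case
      apply base_case t _ ht
      intro i
      by_contra h
      push_neg at h
      exact hFe ⟨i, by simp [hF, h.1, h.2]⟩
    -- F has at least 2 elements
    have hF2 : 2 ≤ F.card := by
      by_contra hlt
      push_neg at hlt
      have h1 : F.card = 1 := by
        have := Finset.card_pos.mpr hFe; omega
      obtain ⟨i, hFi⟩ := Finset.card_eq_one.mp h1
      have hti : t i ≠ 0 ∧ t i ≠ 1 := by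
        have : i ∈ F := hFi ▸ Finset.mem_singleton_self i
        simpa [hF] using this
      have hrest : ∀ x ∈ Finset.univ.erase i, t x = 0 ∨ t x = 1 := by
        intro x hx
        by_contra h
        push_neg at h
        have : x ∈ F := by simp [hF, h.1, h.2]
        rw [hFi, Finset.mem_singleton] at this
        exact (Finset.mem_erase.mp hx).1 this
      set c : ℕ := ((Finset.univ.erase i).filter (fun x => t x = 1)).card with hc
      have hsumrest : ∑ x ∈ Finset.univ.erase i, t x = (c : ℝ) := by
        rw [hc, Finset.card_filter]
        push_cast
        apply Finset.sum_congr rfl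
        intro x hx
        rcases hrest x hx with h | h <;> simp [h]
      have hsplit : t i + (c : ℝ) = (k : ℝ) := by
        rw [← hsumrest, ← ht]
        exact Finset.add_sum_erase _ t (Finset.mem_univ i)
      have h0 : 0 < t i := lt_of_le_of_ne (hb i).1 (Ne.symm hti.1)
      have h1' : t i < 1 := lt_of_le_of_ne (hb i).2 hti.2
      have hck : (c : ℝ) < (k : ℝ) := by linarith
      have hkc : (k : ℝ) < (c : ℝ) + 1 := by linarith
      have hck' : c < k := by exact_mod_cast hck
      have hkc' : k < c + 1 := by exact_mod_cast hkc
      omega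
    obtain ⟨i, hi, j, hj, hij⟩ := Finset.one_lt_card.mp hF2
    have hti : t i ≠ 0 ∧ t i ≠ 1 := by simpa [hF] using hi
    have htj : t j ≠ 0 ∧ t j ≠ 1 := by simpa [hF] using hj
    have h0i : 0 < t i := lt_of_le_of_ne (hb i).1 (Ne.symm hti.1)
    have h1i : t i < 1 := lt_of_le_of_ne (hb i).2 hti.2
    have h0j : 0 < t j := lt_of_le_of_ne (hb j).1 (Ne.symm htj.1)
    have h1j : t j < 1 := lt_of_le_of_ne (hb j).2 htj.2
    set α : ℝ := min (1 - t i) (t j) with hα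
    set β : ℝ := min (t i) (1 - t j) with hβ
    have hα0 : 0 < α := lt_min (by linarith) h0j
    have hβ0 : 0 < β := lt_min h0i (by linarith)
    set d : Fin n → ℝ := fun x => (if x = i then (1:ℝ) else 0) - (if x = j then 1 else 0) with hd
    set tp : Fin n → ℝ := fun x => t x + α * d x with htp
    set tm : Fin n → ℝ := fun x => t x - β * d x with htm
    have hdi : d i = 1 := by simp [hd, hij]
    have hdj : d j = -1 := by simp [hd, Ne.symm hij]
    have hdo : ∀ x, x ≠ i → x ≠ j → d x = 0 := by
      intro x hxi hxj; simp [hd, hxi, hxj]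
    have hsumd : ∑ x, d x = 0 := by
      simp [hd, Finset.sum_sub_distrib]
    -- bounds for tp and tm
    have hbp : ∀ x, 0 ≤ tp x ∧ tp x ≤ 1 := by
      intro x
      by_cases hxi : x = i
      · subst hxi
        simp only [htp, hdi, mul_one]
        have : α ≤ 1 - t x := min_le_left _ _
        constructor <;> nlinarith
      by_cases hxj : x = j
      · subst hxj
        simp only [htp, hdj, mul_neg_one]
        have : α ≤ t x := min_le_right _ _
        constructor <;> nlinarith
      · simp only [htp, hdo x hxi hxj, mul_zero, add_zero]
        exact hb x
    have hbm : ∀ x, 0 ≤ tm x ∧ tm x ≤ 1 := by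
      intro x
      by_cases hxi : x = i
      · subst hxi
        simp only [htm, hdi, mul_one]
        have : β ≤ t x := min_le_left _ _
        constructor <;> nlinarith
      by_cases hxj : x = j
      · subst hxj
        simp only [htm, hdj, mul_neg_one]
        have : β ≤ 1 - t x := min_le_right _ _
        constructor <;> nlinarith
      · simp only [htm, hdo x hxi hxj, mul_zero, sub_zero]
        exact hb x
    have hsp : ∑ x, tp x = (k : ℝ) := by
      simp only [htp]
      rw [Finset.sum_add_distrib, ← Finset.mul_sum, hsumd, mul_zero, add_zero, ht]
    have hsm : ∑ x, tm x = (k : ℝ) := by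
      simp only [htm]
      rw [Finset.sum_sub_distrib, ← Finset.mul_sum, hsumd, mul_zero, sub_zero, ht]
    -- fractional counts drop
    have hsubp : Finset.univ.filter (fun x => tp x ≠ 0 ∧ tp x ≠ 1) ⊆ F := by
      intro x hx
      simp only [Finset.mem_filter, Finset.mem_univ, true_and] at hx
      by_cases hxi : x = i
      · subst hxi; exact hi
      by_cases hxj : x = j
      · subst hxj; exact hj
      · simp only [hF, Finset.mem_filter, Finset.mem_univ, true_and]
        have : tp x = t x := by simp [htp, hdo x hxi hxj]
        rw [← this]; exact hx
    have hsubm : Finset.univ.filter (fun x => tm x ≠ 0 ∧ tm x ≠ 1) ⊆ F := by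
      intro x hx
      simp only [Finset.mem_filter, Finset.mem_univ, true_and] at hx
      by_cases hxi : x = i
      · subst hxi; exact hi
      by_cases hxj : x = j
      · subst hxj; exact hj
      · simp only [hF, Finset.mem_filter, Finset.mem_univ, true_and]
        have : tm x = t x := by simp [htm, hdo x hxi hxj]
        rw [← this]; exact hx
    have hboundp : ∃ x ∈ F, tp x = 0 ∨ tp x = 1 := by
      rcases min_cases (1 - t i) (t j) with ⟨h, _⟩ | ⟨h, _⟩
      · exact ⟨i, hi, Or.inr (by simp only [htp, hdi, mul_one]; rw [← hα] at h; linarith)⟩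
      · exact ⟨j, hj, Or.inl (by simp only [htp, hdj, mul_neg_one]; rw [← hα] at h; linarith)⟩
    have hboundm : ∃ x ∈ F, tm x = 0 ∨ tm x = 1 := by
      rcases min_cases (t i) (1 - t j) with ⟨h, _⟩ | ⟨h, _⟩
      · exact ⟨i, hi, Or.inl (by simp only [htm, hdi, mul_one]; rw [← hβ] at h; linarith)⟩
      · exact ⟨j, hj, Or.inr (by simp only [htm, hdj, mul_neg_one]; rw [← hβ] at h; linarith)⟩
    have hcardp : (Finset.univ.filter (fun x => tp x ≠ 0 ∧ tp x ≠ 1)).card ≤ m := by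
      obtain ⟨x, hxF, hx01⟩ := hboundp
      have hsub : Finset.univ.filter (fun x => tp x ≠ 0 ∧ tp x ≠ 1) ⊆ F.erase x := by
        intro y hy
        refine Finset.mem_erase.mpr ⟨?_, hsubp hy⟩
        rintro rfl
        simp only [Finset.mem_filter, Finset.mem_univ, true_and] at hy
        rcases hx01 with h | h
        · exact hy.1 h
        · exact hy.2 h
      calc (Finset.univ.filter (fun x => tp x ≠ 0 ∧ tp x ≠ 1)).card
          ≤ (F.erase x).card := Finset.card_le_card hsub
        _ = F.card - 1 := Finset.card_erase_of_mem hxF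
        _ ≤ m := by omega
    have hcardm : (Finset.univ.filter (fun x => tm x ≠ 0 ∧ tm x ≠ 1)).card ≤ m := by
      obtain ⟨x, hxF, hx01⟩ := hboundm
      have hsub : Finset.univ.filter (fun x => tm x ≠ 0 ∧ tm x ≠ 1) ⊆ F.erase x := by
        intro y hy
        refine Finset.mem_erase.mpr ⟨?_, hsubm hy⟩
        rintro rfl
        simp only [Finset.mem_filter, Finset.mem_univ, true_and] at hy
        rcases hx01 with h | h
        · exact hy.1 h
        · exact hy.2 h
      calc (Finset.univ.filter (fun x => tm x ≠ 0 ∧ tm x ≠ 1)).card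
          ≤ (F.erase x).card := Finset.card_le_card hsub
        _ = F.card - 1 := Finset.card_erase_of_mem hxF
        _ ≤ m := by omega
    obtain ⟨Qp, ⟨hQp0, hQp1⟩, hQpe⟩ := ih tp hcardp hbp hsp
    obtain ⟨Qm, ⟨hQm0, hQm1⟩, hQme⟩ := ih tm hcardm hbm hsm
    set c : ℝ := β / (α + β) with hcdef
    have hab : 0 < α + β := by linarith
    have hc0 : 0 ≤ c := by positivity
    have hc1 : c ≤ 1 := by
      rw [hcdef, div_le_one hab]; linarith
    have hc' : 1 - c = α / (α + β) := by
      rw [hcdef]; field_simp; ring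
    refine ⟨fun a => c * Qp a + (1 - c) * Qm a, ⟨?_, ?_⟩, ?_⟩
    · intro a
      exact add_nonneg (mul_nonneg hc0 (hQp0 a)) (mul_nonneg (by linarith) (hQm0 a))
    · rw [Finset.sum_add_distrib, ← Finset.mul_sum, ← Finset.mul_sum, hQp1, hQm1]
      ring
    · intro x
      rw [succProb_comb, ← hQpe x, ← hQme x]
      have hkey : c * α = (1 - c) * β := by
        rw [hc', hcdef]; field_simp
      simp only [htp, htm]
      linear_combination (-(d x)) * hkey

/-- **Lemma 2** (Admissibility): a vector `(t_1, …, t_n)` with `Σ t_i = k` arises as the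
per-symbol success probabilities of some `k`-guess strategy if and only if
`0 ≤ t_i ≤ 1` for all `i`. -/
theorem admissible_iff_unit_interval
    {n k : ℕ} (hk1 : 1 ≤ k) (hkn : k ≤ n)
    (t : Fin n → ℝ) (ht : ∑ i, t i = k) :
    (∃ Q : (Fin k → Fin n) → ℝ, IsStrategy Q ∧ ∀ i, t i = succProb Q i) ↔
      ∀ i, 0 ≤ t i ∧ t i ≤ 1 := by
  constructor
  · rintro ⟨Q, ⟨hQ0, hQ1⟩, hQe⟩ i
    rw [hQe i]
    constructor
    · exact Finset.sum_nonneg fun a _ => hQ0 a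
    · rw [succProb, ← hQ1]
      exact Finset.sum_le_sum_of_subset_of_nonneg (Finset.filter_subset _ _)
        (fun a _ _ => hQ0 a)
  · intro hb
    exact key_lemma (Finset.univ.filter (fun i => t i ≠ 0 ∧ t i ≠ 1)).card t le_rfl hb ht
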